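/- Let k > 1 and M_0 ≥ 6 be integers and let x be a real number such that M := M(x,k) satisfies M ≥ M_0. Then 1/log(x/M) ≤ E(M_0,k)/log x, where E(y,k) = 1 + 1/((k+1)·A(y) - 1) and A(y) = log(y/2)/log y. -/

import Mathlib

noncomputable section

/-- The j-th prime, with `nthPrime 1 = 2`, `nthPrime 2 = 3`, ... -/
def nthPrime (j : ℕ) : ℕ := Nat.nth Nat.Prime (j - 1)

/-- The chain sum `p_b^k + p_{b+1}^k + ... + p_t^k`. -/
def chainSum (k b t : ℕ) : ℕ := ∑ j ∈ Finset.Icc b t, nthPrime j ^ k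

/-- `sk k x` is the total number of k-gleeful representations of integers ≤ x,
i.e. the number of pairs `1 ≤ b ≤ t` with `p_b^k + ... + p_t^k ≤ x`. -/
def sk (k : ℕ) (x : ℝ) : ℕ :=
  Set.ncard {bt : ℕ × ℕ | 1 ≤ bt.1 ∧ bt.1 ≤ bt.2 ∧ (chainSum k bt.1 bt.2 : ℝ) ≤ x}

/-- `skm k m x` is the number of indices `n ≥ 1` with
`p_n^k + p_{n+1}^k + ... + p_{n+m-1}^k ≤ x`. -/
def skm (k m : ℕ) (x : ℝ) : ℕ :=
  Set.ncard {b : ℕ | 1 ≤ b ∧ (chainSum k b (b + m - 1) : ℝ) ≤ x}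

/-- The prefix sum `p_1^k + ... + p_M^k`. -/
def prefixSum (k M : ℕ) : ℕ := ∑ j ∈ Finset.Icc 1 M, nthPrime j ^ k

/-- The prime counting function: the number of primes ≤ t. -/
def primePi (t : ℝ) : ℕ := Set.ncard {p : ℕ | p.Prime ∧ (p : ℝ) ≤ t}

/-- `fkm k m n` is the number of indices `b ≥ 1` with
`n = p_b^k + p_{b+1}^k + ... + p_{b+m-1}^k`. -/
def fkm (k m n : ℕ) : ℕ :=
  Set.ncard {b : ℕ | 1 ≤ b ∧ n = chainSum k b (b + m - 1)}

def A (y : ℝ) : ℝ := Real.log (y / 2) / Real.log y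

def B (y : ℝ) (k : ℕ) : ℝ :=
  Real.log (y + 1) / Real.log y +
    Real.log ((Real.log (y + 1)) ^ 2) / Real.log y * ((k : ℝ) / ((k : ℝ) + 1))

def C (y : ℝ) (k : ℕ) : ℝ :=
  (y / (y - 1)) ^ ((1 : ℝ) / ((k : ℝ) + 1)) * B y k ^ ((k : ℝ) / ((k : ℝ) + 1))

def D (y : ℝ) (k : ℕ) : ℝ :=
  (y / (y + 3)) *
    (Real.log (y / 2) / (Real.log y + 2 * Real.log (Real.log (y + 2)))) ^
      ((k : ℝ) / ((k : ℝ) + 1))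

def E (y : ℝ) (k : ℕ) : ℝ := 1 + 1 / (((k : ℝ) + 1) * A y - 1)

def F (y : ℝ) (k : ℕ) : ℝ :=
  ((y + 1) / y) ^ (((k : ℝ) - 1) / (k : ℝ)) *
    (4 : ℝ) ^ (((k : ℝ) - 1) / ((k : ℝ) * ((k : ℝ) + 1))) *
    C y k ^ (((k : ℝ) - 1) / (k : ℝ)) * E y k

def U (y : ℝ) (k : ℕ) : ℝ := 1.25506 * F y k

def L (y : ℝ) (k : ℕ) : ℝ := ((y - 1) / y) * D y k ^ 2

def ck (k : ℕ) : ℝ :=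
  ((k : ℝ) ^ 2 / ((k : ℝ) - 1)) * ((k : ℝ) + 1) ^ (((k : ℝ) - 1) / (k : ℝ))


lemma nth_prime_ge (n : ℕ) : n + 2 ≤ Nat.nth Nat.Prime n := by
  induction n with
  | zero =>
    have h2 : Nat.nth Nat.Prime (Nat.count Nat.Prime 2) = 2 :=
      Nat.nth_count (by norm_num)
    have hc : Nat.count Nat.Prime 2 = 0 := by decide
    rw [hc] at h2
    omega
  | succ n ih =>
    have h : Nat.nth Nat.Prime n < Nat.nth Nat.Prime (n + 1) :=
      (Nat.nth_lt_nth Nat.infinite_setOf_prime).2 (Nat.lt_succ_self n)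
    omega

lemma prefixSum_lb (k M : ℕ) : ((M : ℝ) / 2) ^ (k + 1) ≤ (prefixSum k M : ℝ) := by
  have hnat : (M - M / 2) * (M / 2 + 2) ^ k ≤ prefixSum k M := by
    rw [prefixSum]
    calc (M - M / 2) * (M / 2 + 2) ^ k
        = ∑ _j ∈ Finset.Icc (M / 2 + 1) M, (M / 2 + 2) ^ k := by
          rw [Finset.sum_const, Nat.card_Icc, smul_eq_mul]
          congr 1
          omega
      _ ≤ ∑ j ∈ Finset.Icc (M / 2 + 1) M, nthPrime j ^ k := by
          apply Finset.sum_le_sum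
          intro j hj
          simp only [Finset.mem_Icc] at hj
          apply Nat.pow_le_pow_left
          have h1 : j - 1 + 2 ≤ Nat.nth Nat.Prime (j - 1) := nth_prime_ge (j - 1)
          unfold nthPrime
          omega
      _ ≤ ∑ j ∈ Finset.Icc 1 M, nthPrime j ^ k := by
          apply Finset.sum_le_sum_of_subset
          apply Finset.Icc_subset_Icc_left
          omega
  have h1 : ((M : ℝ) / 2) ≤ ((M - M / 2 : ℕ) : ℝ) := by
    have : M ≤ 2 * (M - M / 2) := by omega
    have := (Nat.cast_le (α := ℝ)).2 this
    push_cast at this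
    linarith
  have h2 : ((M : ℝ) / 2) ≤ ((M / 2 + 2 : ℕ) : ℝ) := by
    have : M ≤ 2 * (M / 2 + 2) := by omega
    have := (Nat.cast_le (α := ℝ)).2 this
    push_cast at this ⊢
    linarith
  have hMnn : (0 : ℝ) ≤ (M : ℝ) / 2 := by positivity
  calc ((M : ℝ) / 2) ^ (k + 1) = ((M : ℝ) / 2) * ((M : ℝ) / 2) ^ k := by ring
    _ ≤ ((M - M / 2 : ℕ) : ℝ) * ((M / 2 + 2 : ℕ) : ℝ) ^ k := by
        apply mul_le_mul h1 (pow_le_pow_left₀ hMnn h2 k) (by positivity) (by positivity)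
    _ = (((M - M / 2) * (M / 2 + 2) ^ k : ℕ) : ℝ) := by push_cast; ring
    _ ≤ (prefixSum k M : ℝ) := by exact_mod_cast hnat

theorem inv_log_x_div_M_le (k M0 : ℕ) (hk : 1 < k) (hM0 : 6 ≤ M0)
    (x : ℝ) (M : ℕ)
    (hM1 : (prefixSum k M : ℝ) ≤ x) (hM2 : x < (prefixSum k (M + 1) : ℝ))
    (hMM0 : M0 ≤ M) :
    1 / Real.log (x / (M : ℝ)) ≤ E (M0 : ℝ) k / Real.log x := by
  have hM06 : (6 : ℝ) ≤ (M0 : ℝ) := by exact_mod_cast hM0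
  have hM6 : (6 : ℝ) ≤ (M : ℝ) := by exact_mod_cast le_trans hM0 hMM0
  have hM0M : (M0 : ℝ) ≤ (M : ℝ) := by exact_mod_cast hMM0
  have hk3 : (3 : ℝ) ≤ (k : ℝ) + 1 := by
    have : (2 : ℝ) ≤ (k : ℝ) := by exact_mod_cast hk
    linarith
  have hxlb : ((M : ℝ) / 2) ^ (k + 1) ≤ x := le_trans (prefixSum_lb k M) hM1
  have hx27 : (27 : ℝ) ≤ x := by
    calc (27 : ℝ) = 3 ^ 3 := by norm_num
      _ ≤ ((M : ℝ) / 2) ^ 3 := by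
          apply pow_le_pow_left₀ (by norm_num)
          linarith
      _ ≤ ((M : ℝ) / 2) ^ (k + 1) := by
          apply pow_le_pow_right₀ (by linarith)
          omega
      _ ≤ x := hxlb
  have hlogx : 0 < Real.log x := Real.log_pos (by linarith)
  -- logs
  have hlogM0 : 0 < Real.log (M0 : ℝ) :=
    Real.log_pos (by linarith)
  have hlogM : 0 < Real.log (M : ℝ) :=
    Real.log_pos (by linarith)
  have hlogMM0 : Real.log (M0 : ℝ) ≤ Real.log (M : ℝ) :=
    Real.log_le_log (by linarith) hM0M
  have hlog2 : (0 : ℝ) < Real.log 2 := Real.log_pos (by norm_num)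
  have hA_eq : ∀ y : ℝ, 2 ≤ y → A y = 1 - Real.log 2 / Real.log y := by
    intro y hy
    have hy0 : (0 : ℝ) < y := by linarith
    have hly : 0 < Real.log y := Real.log_pos (by linarith)
    unfold A
    rw [Real.log_div (ne_of_gt hy0) (by norm_num), sub_div, div_self (ne_of_gt hly)]
  have hAmono : A (M0 : ℝ) ≤ A (M : ℝ) := by
    rw [hA_eq _ (by linarith), hA_eq _ (by linarith)]
    have : Real.log 2 / Real.log (M : ℝ) ≤ Real.log 2 / Real.log (M0 : ℝ) :=
      div_le_div_of_nonneg_left (le_of_lt hlog2) hlogM0 hlogMM0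
    linarith
  -- A M0 > 1/3
  have hAlb : 1 / 3 < A (M0 : ℝ) := by
    rw [hA_eq _ (by linarith)]
    have hlog6 : Real.log 2 / Real.log (M0 : ℝ) ≤ Real.log 2 / Real.log 6 := by
      apply div_le_div_of_nonneg_left (le_of_lt hlog2) (Real.log_pos (by norm_num))
      exact Real.log_le_log (by norm_num) hM06
    have h836 : Real.log 8 < Real.log 36 := Real.log_lt_log (by norm_num) (by norm_num)
    have h8 : Real.log 8 = 3 * Real.log 2 := by
      rw [show (8 : ℝ) = 2 ^ 3 by norm_num, Real.log_pow]; push_cast; ring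
    have h36 : Real.log 36 = 2 * Real.log 6 := by
      rw [show (36 : ℝ) = 6 ^ 2 by norm_num, Real.log_pow]; push_cast; ring
    have hl6 : 0 < Real.log 6 := Real.log_pos (by norm_num)
    have : Real.log 2 / Real.log 6 < 2 / 3 := by
      rw [div_lt_div_iff₀ hl6 (by norm_num)]
      nlinarith
    linarith
  set a : ℝ := ((k : ℝ) + 1) * A (M0 : ℝ) with ha_def
  have ha1 : 1 < a := by
    have hApos : 0 < A (M0 : ℝ) := by linarith
    have : 3 * A (M0 : ℝ) ≤ a := by
      apply mul_le_mul_of_nonneg_right hk3 (le_of_lt hApos)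
    linarith
  -- key: a * log M ≤ log x
  have hkey : a * Real.log (M : ℝ) ≤ Real.log x := by
    have h1 : Real.log (((M : ℝ) / 2) ^ (k + 1)) ≤ Real.log x :=
      Real.log_le_log (by positivity) hxlb
    rw [Real.log_pow] at h1
    have h2 : A (M : ℝ) * Real.log (M : ℝ) = Real.log ((M : ℝ) / 2) := by
      unfold A
      field_simp
    have h3 : a * Real.log (M : ℝ) ≤ ((k : ℝ) + 1) * (A (M : ℝ) * Real.log (M : ℝ)) := by
      rw [ha_def]
      have := mul_le_mul_of_nonneg_right hAmono (le_of_lt hlogM)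
      nlinarith
    rw [h2] at h3
    push_cast at h1
    linarith
  have hlogMle : Real.log (M : ℝ) ≤ Real.log x / a := by
    rw [le_div_iff₀ (by linarith)]
    linarith [hkey]
  have hlogdiv : Real.log (x / (M : ℝ)) = Real.log x - Real.log (M : ℝ) := by
    apply Real.log_div (by linarith) (by positivity)
  have hlb : Real.log x * ((a - 1) / a) ≤ Real.log (x / (M : ℝ)) := by
    rw [hlogdiv]
    have : Real.log x * ((a - 1) / a) = Real.log x - Real.log x / a := by
      field_simp
    rw [this]
    linarith
  have hlbpos : 0 < Real.log x * ((a - 1) / a) := by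
    apply mul_pos hlogx
    apply div_pos (by linarith) (by linarith)
  have hE : E (M0 : ℝ) k = a / (a - 1) := by
    have ha1' : a - 1 ≠ 0 := by linarith
    unfold E
    rw [← ha_def]
    field_simp
    ring
  rw [hE]
  calc 1 / Real.log (x / (M : ℝ)) ≤ 1 / (Real.log x * ((a - 1) / a)) :=
        one_div_le_one_div_of_le hlbpos hlb
    _ = a / (a - 1) / Real.log x := by
        have h : Real.log x * ((a - 1) / a) = ((a - 1) * Real.log x) / a := by ring
        rw [h, one_div_div, div_div]
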